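/- Consider the Luby universal cutoff sequence T = (1,1,2,1,1,2,4,1,1,2,1,1,2,4,8,…), defined recursively by: if k = 2^i − 1 then T_k = 2^(i−1), else T_k = T_{k − 2^(i−1) + 1} where i is the unique integer with 2^(i−1) ≤ k < 2^i − 1. Then for every j ≥ 0 and every n, the number of indices k ≤ 2^(j+1) − 1 with T_k = 2^j is exactly 1, and more generally each value 2^m appears exactly 2^(j−m) times among the first 2^(j+1) − 1 terms; hence the total time Σ_{k ≤ 2^(j+1)−1} T_k = (j+1)·2^j. -/

import Mathlib

lemma luby_key (T : ℕ → ℕ)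
    (h1 : ∀ i : ℕ, 1 ≤ i → T (2 ^ i - 1) = 2 ^ (i - 1))
    (h2 : ∀ i k : ℕ, 2 ^ (i - 1) ≤ k → k < 2 ^ i - 1 →
      T k = T (k - 2 ^ (i - 1) + 1)) (j : ℕ) (f : ℕ → ℕ) :
    ∑ k ∈ Finset.Icc 1 (2 ^ (j + 1) - 1), f (T k)
      = 2 * (∑ k ∈ Finset.Icc 1 (2 ^ j - 1), f (T k)) + f (2 ^ j) := by
  have hp : (1:ℕ) ≤ 2 ^ j := Nat.one_le_two_pow
  have h2p : (2:ℕ) ^ (j + 1) = 2 * 2 ^ j := by ring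
  have hIcc : ∀ n : ℕ, Finset.Icc 1 n = Finset.Ioc 0 n := by
    intro n; rw [← Finset.Icc_add_one_left_eq_Ioc]; rfl
  rw [hIcc, hIcc]
  have hsplit := Finset.sum_Ioc_consecutive (fun k => f (T k))
      (show (0:ℕ) ≤ 2 ^ j - 1 by omega) (show 2 ^ j - 1 ≤ 2 ^ (j+1) - 1 by omega)
  rw [← hsplit]
  have htop : (2:ℕ) ^ (j + 1) - 1 = (2 ^ (j + 1) - 2) + 1 := by omega
  rw [htop, Finset.sum_Ioc_succ_top (show 2 ^ j - 1 ≤ 2 ^ (j+1) - 2 by omega)]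
  have hT : T ((2 ^ (j+1) - 2) + 1) = 2 ^ j := by
    rw [show (2 ^ (j+1) - 2) + 1 = 2 ^ (j+1) - 1 by omega]
    simpa using h1 (j+1) (by omega)
  rw [hT]
  have hmap : Finset.Ioc (2 ^ j - 1) (2 ^ (j+1) - 2)
      = Finset.map (addRightEmbedding (2 ^ j - 1)) (Finset.Ioc 0 (2 ^ j - 1)) := by
    rw [Finset.map_add_right_Ioc]
    congr 1 <;> omega
  rw [hmap, Finset.sum_map]
  have hcongr : ∀ t ∈ Finset.Ioc 0 (2 ^ j - 1),
      f (T (addRightEmbedding (2 ^ j - 1) t)) = f (T t) := by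
    intro t ht
    simp only [Finset.mem_Ioc] at ht
    have := h2 (j + 1) (t + (2 ^ j - 1)) (by simp; omega) (by omega)
    simp only [Nat.add_sub_cancel] at this
    rw [show (addRightEmbedding (2 ^ j - 1)) t = t + (2 ^ j - 1) from rfl, this]
    congr 2
    omega
  rw [Finset.sum_congr rfl hcongr]
  ring

lemma luby_count (T : ℕ → ℕ)
    (h1 : ∀ i : ℕ, 1 ≤ i → T (2 ^ i - 1) = 2 ^ (i - 1))
    (h2 : ∀ i k : ℕ, 2 ^ (i - 1) ≤ k → k < 2 ^ i - 1 →
      T k = T (k - 2 ^ (i - 1) + 1)) (j : ℕ) (m : ℕ) :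
    (∑ k ∈ Finset.Icc 1 (2 ^ (j + 1) - 1), if T k = 2 ^ m then 1 else 0)
      = if m ≤ j then 2 ^ (j - m) else 0 := by
  induction j with
  | zero =>
    have key := luby_key T h1 h2 0 (fun v => if v = 2 ^ m then 1 else 0)
    beta_reduce at key
    rw [key, show (2:ℕ) ^ 0 - 1 = 0 from rfl,
      Finset.Icc_eq_empty (by omega), Finset.sum_empty, Nat.mul_zero, Nat.zero_add]
    by_cases hm : m = 0
    · subst hm; simp
    · rw [if_neg (fun hc => hm (by simpa using
        (Nat.pow_right_injective (le_refl 2) hc).symm)), if_neg (by omega)]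
  | succ n ih =>
    have key := luby_key T h1 h2 (n+1) (fun v => if v = 2 ^ m then 1 else 0)
    beta_reduce at key
    rw [key, ih]
    rcases lt_trichotomy m (n + 1) with h | h | h
    · rw [if_pos (by omega : m ≤ n), if_pos (by omega : m ≤ n + 1),
        if_neg (fun hc => by
          have := Nat.pow_right_injective (le_refl 2) hc; omega),
        show n + 1 - m = (n - m) + 1 by omega]
      ring
    · subst h; simp
    · rw [if_neg (show ¬ m ≤ n by omega), if_neg (show ¬ m ≤ n + 1 by omega),
        if_neg (fun hc => by
          have := Nat.pow_right_injective (le_refl 2) hc; omega)]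

lemma luby_sum (T : ℕ → ℕ)
    (h1 : ∀ i : ℕ, 1 ≤ i → T (2 ^ i - 1) = 2 ^ (i - 1))
    (h2 : ∀ i k : ℕ, 2 ^ (i - 1) ≤ k → k < 2 ^ i - 1 →
      T k = T (k - 2 ^ (i - 1) + 1)) (j : ℕ) :
    (∑ k ∈ Finset.Icc 1 (2 ^ (j + 1) - 1), T k) = (j + 1) * 2 ^ j := by
  induction j with
  | zero =>
    have := luby_key T h1 h2 0 id
    simpa using this
  | succ n ih =>
    have := luby_key T h1 h2 (n+1) id
    simp only [id] at this
    rw [this, ih]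
    ring

/-- Luby universal cutoff sequence `T = (1,1,2,1,1,2,4,1,1,2,1,1,2,4,8,…)`
(indexed from 1), defined recursively by `T (2^i - 1) = 2^(i-1)` for `i ≥ 1`,
and `T k = T (k - 2^(i-1) + 1)` whenever `2^(i-1) ≤ k < 2^i - 1`. Then among
the first `2^(j+1) - 1` terms, each value `2^m` (for `m ≤ j`) appears exactly
`2^(j-m)` times (in particular the value `2^j` appears exactly once), and the
total time is `∑_{k ≤ 2^(j+1)-1} T k = (j+1) * 2^j`. -/
theorem luby_sequence_counting (T : ℕ → ℕ)
    (h1 : ∀ i : ℕ, 1 ≤ i → T (2 ^ i - 1) = 2 ^ (i - 1))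
    (h2 : ∀ i k : ℕ, 2 ^ (i - 1) ≤ k → k < 2 ^ i - 1 →
      T k = T (k - 2 ^ (i - 1) + 1)) (j : ℕ) :
    ((Finset.Icc 1 (2 ^ (j + 1) - 1)).filter (fun k => T k = 2 ^ j)).card = 1 ∧
    (∀ m : ℕ, m ≤ j →
      ((Finset.Icc 1 (2 ^ (j + 1) - 1)).filter
        (fun k => T k = 2 ^ m)).card = 2 ^ (j - m)) ∧
    (∑ k ∈ Finset.Icc 1 (2 ^ (j + 1) - 1), T k) = (j + 1) * 2 ^ j := by
  have hcard : ∀ m, ((Finset.Icc 1 (2 ^ (j + 1) - 1)).filter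
      (fun k => T k = 2 ^ m)).card
      = ∑ k ∈ Finset.Icc 1 (2 ^ (j + 1) - 1), if T k = 2 ^ m then 1 else 0 := by
    intro m; rw [Finset.card_filter]
  refine ⟨?_, ?_, luby_sum T h1 h2 j⟩
  · rw [hcard j, luby_count T h1 h2 j j]
    simp
  · intro m hm
    rw [hcard m, luby_count T h1 h2 j m, if_pos hm]
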